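/- For any two finite simple graphs G₁ and G₂, the independence polynomial of the lexicographic product G₁[G₂] satisfies I(G₁[G₂]; x) = I(G₁; I(G₂; x) − 1). -/

import Mathlib

open Polynomial Finset
open scoped Classical

/-- The independence polynomial of a finite simple graph. -/
noncomputable def indepPoly {V : Type*} [Fintype V] (G : SimpleGraph V) : Polynomial ℝ :=
  ∑ s ∈ Finset.univ.filter (fun s : Finset V => ∀ u ∈ s, ∀ v ∈ s, ¬ G.Adj u v),
    X ^ s.card

/-- The lexicographic product `G₁[G₂]`. -/
def lexProd {V₁ V₂ : Type*} (G₁ : SimpleGraph V₁) (G₂ : SimpleGraph V₂) :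
    SimpleGraph (V₁ × V₂) where
  Adj p q := G₁.Adj p.1 q.1 ∨ (p.1 = q.1 ∧ G₂.Adj p.2 q.2)
  symm := by
    refine ⟨?_⟩
    intro p q h
    rcases h with h | ⟨h1, h2⟩
    · exact Or.inl h.symm
    · exact Or.inr ⟨h1.symm, h2.symm⟩
  loopless := by
    refine ⟨?_⟩
    intro p h
    rcases h with h | ⟨_, h2⟩
    · exact G₁.irrefl h
    · exact G₂.irrefl h2

noncomputable def jmap {V₁ V₂ : Type*} (p : Σ s : Finset V₁, ∀ a ∈ s, Finset V₂) :
    Finset (V₁ × V₂) :=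
  p.1.attach.biUnion fun v => (p.2 v.1 v.2).image fun w => (v.1, w)

lemma mem_jmap {V₁ V₂ : Type*} (p : Σ s : Finset V₁, ∀ a ∈ s, Finset V₂) (a : V₁) (x : V₂) :
    (a, x) ∈ jmap p ↔ ∃ h : a ∈ p.1, x ∈ p.2 a h := by
  simp only [jmap, Finset.mem_biUnion, Finset.mem_image, Finset.mem_attach, true_and]
  constructor
  · rintro ⟨⟨v, hv⟩, w, hw, heq⟩
    obtain ⟨rfl, rfl⟩ := Prod.mk.injEq .. ▸ heq
    exact ⟨hv, hw⟩
  · rintro ⟨h, hx⟩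
    exact ⟨⟨a, h⟩, x, hx, rfl⟩

lemma card_jmap {V₁ V₂ : Type*} (p : Σ s : Finset V₁, ∀ a ∈ s, Finset V₂) :
    (jmap p).card = ∑ v ∈ p.1.attach, (p.2 v.1 v.2).card := by
  rw [jmap, Finset.card_biUnion]
  · refine Finset.sum_congr rfl fun v _ => ?_
    exact Finset.card_image_of_injective _ (fun x y hxy => (Prod.mk.injEq .. ▸ hxy).2)
  · intro v _ v' _ hne
    simp only [Finset.disjoint_left, Finset.mem_image]
    rintro ⟨a, b⟩ ⟨w, hw, heq⟩ ⟨w', hw', heq'⟩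
    obtain ⟨rfl, rfl⟩ := Prod.mk.injEq .. ▸ heq
    obtain ⟨h1, -⟩ := Prod.mk.injEq .. ▸ heq'
    exact hne (Subtype.ext h1.symm)

lemma sigma_mk_eq {V₁ V₂ : Type*} {s s' : Finset V₁} (f : ∀ a ∈ s, Finset V₂)
    (f' : ∀ a ∈ s', Finset V₂) (h : s = s')
    (h2 : ∀ a (ha : a ∈ s) (ha' : a ∈ s'), f a ha = f' a ha') :
    (⟨s, f⟩ : Σ t : Finset V₁, ∀ a ∈ t, Finset V₂) = ⟨s', f'⟩ := by
  subst h
  congr 1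
  funext a ha
  exact h2 a ha ha

noncomputable def imap {V₁ V₂ : Type*} (T : Finset (V₁ × V₂)) :
    Σ s : Finset V₁, ∀ a ∈ s, Finset V₂ :=
  ⟨T.image Prod.fst, fun v _ => (T.filter fun q => q.1 = v).image Prod.snd⟩

set_option maxHeartbeats 1000000 in
/-- `I(G₁[G₂];x) = I(G₁; I(G₂;x) − 1)`. -/
theorem stmt18 {V₁ V₂ : Type*} [Fintype V₁] [Fintype V₂]
    (G₁ : SimpleGraph V₁) (G₂ : SimpleGraph V₂) :
    indepPoly (lexProd G₁ G₂) = (indepPoly G₁).comp (indepPoly G₂ - 1) := by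
  classical
  set F₁ := Finset.univ.filter (fun s : Finset V₁ => ∀ u ∈ s, ∀ v ∈ s, ¬ G₁.Adj u v) with hF₁
  set F₂ := Finset.univ.filter (fun s : Finset V₂ => ∀ u ∈ s, ∀ v ∈ s, ¬ G₂.Adj u v) with hF₂
  set A₂ := F₂.erase ∅ with hA₂
  have hEmp : (∅ : Finset V₂) ∈ F₂ := by simp [hF₂]
  have hQ : indepPoly G₂ - 1 = ∑ t ∈ A₂, (X : ℝ[X]) ^ t.card := by
    rw [indepPoly, ← hF₂, ← Finset.add_sum_erase _ _ hEmp]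
    simp [hA₂]
  rw [indepPoly, indepPoly, ← hF₁, Polynomial.sum_comp, hQ]
  simp only [Polynomial.X_pow_comp]
  have key : ∀ s : Finset V₁, (∑ t ∈ A₂, (X : ℝ[X]) ^ t.card) ^ s.card
      = ∑ f ∈ s.pi (fun _ => A₂), (X : ℝ[X]) ^ (∑ v ∈ s.attach, (f v.1 v.2).card) := by
    intro s
    rw [← Finset.prod_const, Finset.prod_sum]
    exact Finset.sum_congr rfl fun f _ => Finset.prod_pow_eq_pow_sum _ _ _
  simp only [key]
  rw [Finset.sum_sigma']
  refine (Finset.sum_nbij' jmap imap ?_ ?_ ?_ ?_ ?_).symm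
  · -- jmap maps sigma into Fprod
    rintro ⟨s, f⟩ hp
    rw [Finset.mem_sigma] at hp
    obtain ⟨hs, hf⟩ := hp
    rw [hF₁, Finset.mem_filter] at hs
    rw [Finset.mem_pi] at hf
    simp only [Finset.mem_filter, Finset.mem_univ, true_and]
    rintro ⟨a, x⟩ hax ⟨b, y⟩ hby hadj
    rw [mem_jmap] at hax hby
    obtain ⟨ha, hx⟩ := hax
    obtain ⟨hb, hy⟩ := hby
    rcases hadj with h | ⟨h1, h2⟩
    · exact hs.2 a ha b hb h
    · subst h1
      have hfa := hf a ha
      rw [hA₂, Finset.mem_erase, hF₂, Finset.mem_filter] at hfa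
      exact hfa.2.2 x hx y hy h2
  · -- imap maps Fprod into sigma
    intro T hT
    simp only [Finset.mem_filter] at hT
    rw [Finset.mem_sigma]
    constructor
    · rw [hF₁, Finset.mem_filter]
      refine ⟨Finset.mem_univ _, ?_⟩
      intro u hu v hv h
      simp only [imap] at hu hv
      simp only [Finset.mem_image] at hu hv
      obtain ⟨⟨a, x⟩, hx, rfl⟩ := hu
      obtain ⟨⟨b, y⟩, hy, rfl⟩ := hv
      exact hT.2 _ hx _ hy (Or.inl h)
    · rw [Finset.mem_pi]
      intro v hv
      simp only [imap] at hv ⊢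
      rw [hA₂, Finset.mem_erase, hF₂, Finset.mem_filter]
      refine ⟨?_, Finset.mem_univ _, ?_⟩
      · simp only [Finset.mem_image] at hv
        obtain ⟨⟨a, x⟩, hx, rfl⟩ := hv
        simp only [← Finset.nonempty_iff_ne_empty, Finset.Nonempty, Finset.mem_image,
          Finset.mem_filter]
        exact ⟨x, ⟨a, x⟩, ⟨hx, rfl⟩, rfl⟩
      · intro x hx y hy h
        simp only [Finset.mem_image, Finset.mem_filter] at hx hy
        obtain ⟨q, ⟨hqT, hqv⟩, hqx⟩ := hx
        obtain ⟨r, ⟨hrT, hrv⟩, hry⟩ := hy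
        subst hqx; subst hry
        exact hT.2 _ hqT _ hrT (Or.inr ⟨hqv.trans hrv.symm, h⟩)
  · -- left inverse: imap (jmap p) = p
    rintro ⟨s, f⟩ hp
    rw [Finset.mem_sigma, Finset.mem_pi] at hp
    obtain ⟨hs, hf⟩ := hp
    have him : (jmap ⟨s, f⟩).image Prod.fst = s := by
      ext a
      simp only [Finset.mem_image]
      constructor
      · rintro ⟨⟨b, x⟩, hb, rfl⟩
        exact ((mem_jmap _ _ _).1 hb).1
      · intro ha
        have hne : (f a ha).Nonempty := by
          have := hf a ha
          rw [hA₂, Finset.mem_erase] at this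
          exact Finset.nonempty_iff_ne_empty.2 this.1
        obtain ⟨x, hx⟩ := hne
        exact ⟨(a, x), (mem_jmap _ _ _).2 ⟨ha, hx⟩, rfl⟩
    refine sigma_mk_eq _ _ him ?_
    intro a ha ha'
    ext x
    simp only [Finset.mem_image, Finset.mem_filter]
    constructor
    · rintro ⟨⟨b, y⟩, ⟨hb, hba⟩, hyx⟩
      simp only at hba hyx
      subst hba; subst hyx
      obtain ⟨h1, h2⟩ := (mem_jmap _ _ _).1 hb
      exact h2
    · intro hx
      exact ⟨(a, x), ⟨(mem_jmap _ _ _).2 ⟨ha', hx⟩, rfl⟩, rfl⟩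
  · -- right inverse: jmap (imap T) = T
    intro T _
    ext ⟨a, x⟩
    rw [mem_jmap]
    simp only [imap, Finset.mem_image, Finset.mem_filter]
    constructor
    · rintro ⟨-, q, ⟨hq, hqa⟩, hqx⟩
      have : q = (a, x) := Prod.ext hqa hqx
      exact this ▸ hq
    · intro h
      exact ⟨⟨(a, x), h, rfl⟩, (a, x), ⟨h, rfl⟩, rfl⟩
  · -- exponent equality
    rintro ⟨s, f⟩ _
    rw [card_jmap]
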